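/- Let H be a finite graph with root o, and consider the exploration of its edge set that first iteratively reveals all edges incident to the growing cluster of o (always picking the smallest-index admissible edge), and then reveals the remaining edges in order. If at step k+1 the revealed history is (e,x) and the edge e_{k+1} = {v,w} is pivotal for the event {C_o ∩ G = ∅} (for some vertex coloring), then exactly one endpoint, say v, is connected to o by open revealed edges, and the other endpoint w is connected to some green vertex by a path of open edges none of which has been revealed among e_1,…,e_{k+1}. -/

import Mathlib

open scoped ENNReal

/-- The graph of open edges of `H` lying in the set `S` of edges. -/
def openOn {V : Type*} (H : SimpleGraph V) (ω : Sym2 V → Bool) (S : Set (Sym2 V)) :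
    SimpleGraph V where
  Adj a b := H.Adj a b ∧ ω s(a, b) = true ∧ s(a, b) ∈ S
  symm := by
    constructor
    intro a b h
    refine ⟨h.1.symm, ?_, ?_⟩
    · rw [Sym2.eq_swap]; exact h.2.1
    · rw [Sym2.eq_swap]; exact h.2.2
  loopless := ⟨fun a h => H.loopless.1 a h.1⟩

/-- The open cluster `C_o` of the vertex `o` in the configuration `ω`. -/
def cluster {V : Type*} (H : SimpleGraph V) (o : V) (ω : Sym2 V → Bool) : Set V :=
  {v | (openOn H ω Set.univ).Reachable o v}

/-- An exploration of a finite set `E`: an adapted ordering of the coordinates. -/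
structure Exploration (E : Type*) [Fintype E] where
  order : (E → Bool) → Fin (Fintype.card E) → E
  bij : ∀ ω, Function.Bijective (order ω)
  adapted : ∀ ω ω' (k : Fin (Fintype.card E)),
    (∀ j, j < k → order ω j = order ω' j ∧ ω (order ω j) = ω' (order ω j)) →
    order ω k = order ω' k

/-- The set of coordinates revealed strictly before step `k`. -/
def Revealed {E : Type*} [Fintype E] (expl : Exploration E) (ω : E → Bool) (k : ℕ) :
    Set E :=
  {a | ∃ j : Fin (Fintype.card E), (j : ℕ) < k ∧ expl.order ω j = a}

/-- A coordinate `a` is pivotal for `A` at `(ω, η)` if flipping `ω a` changes membership. -/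
def Pivotal {E : Type*} [DecidableEq E] {M : Type*} (A : Set ((E → Bool) × M)) (a : E)
    (z : (E → Bool) × M) : Prop :=
  ¬ (((Function.update z.1 a (! z.1 a), z.2) ∈ A) ↔ z ∈ A)

/-- The unrevealed edges incident to the currently revealed open cluster of `o`. -/
def BoundaryEdges {V : Type*} [Fintype V] [DecidableEq V] (H : SimpleGraph V) (o : V)
    (expl : Exploration (Sym2 V)) (ω : Sym2 V → Bool) (k : ℕ) : Set (Sym2 V) :=
  {a | a ∉ Revealed expl ω k ∧ ∃ v w : V, a = s(v, w) ∧ H.Adj v w ∧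
    (openOn H ω (Revealed expl ω k)).Reachable o v}

/-- Monotonicity of `openOn` in both the configuration and the allowed edge set. -/
lemma openOn_le {V : Type*} (H : SimpleGraph V) {ω ω' : Sym2 V → Bool}
    {S T : Set (Sym2 V)} (hS : S ⊆ T) (hω : ∀ e ∈ S, ω e = true → ω' e = true) :
    openOn H ω S ≤ openOn H ω' T := by
  intro a b (hab : H.Adj a b ∧ ω s(a, b) = true ∧ s(a, b) ∈ S)
  exact (⟨hab.1, hω _ hab.2.2 hab.2.1, hS hab.2.2⟩ : H.Adj a b ∧ ω' s(a, b) = true ∧ s(a, b) ∈ T)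

/-- Splitting a walk at the first edge not lying in `R`. -/
lemma openOn_reach_split {V : Type*} (H : SimpleGraph V) (ω : Sym2 V → Bool)
    (S R : Set (Sym2 V)) {x y : V} (h : (openOn H ω S).Reachable x y) :
    (openOn H ω (S ∩ R)).Reachable x y ∨
    ∃ p q : V, H.Adj p q ∧ ω s(p, q) = true ∧ s(p, q) ∈ S ∧ s(p, q) ∉ R ∧
      (openOn H ω (S ∩ R)).Reachable x p := by
  obtain ⟨w⟩ := h
  induction w with
  | nil => exact Or.inl (SimpleGraph.Reachable.refl _)
  | @cons u v z h' p ih =>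
    have h' : H.Adj u v ∧ ω s(u, v) = true ∧ s(u, v) ∈ S := h'
    by_cases hR : s(u, v) ∈ R
    · have hadj : (openOn H ω (S ∩ R)).Adj u v :=
        (⟨h'.1, h'.2.1, h'.2.2, hR⟩ : H.Adj u v ∧ ω s(u, v) = true ∧ s(u, v) ∈ S ∩ R)
      rcases ih with hl | ⟨p', q', h1, h2, h3, h4, h5⟩
      · exact Or.inl (hadj.reachable.trans hl)
      · exact Or.inr ⟨p', q', h1, h2, h3, h4, hadj.reachable.trans h5⟩
    · exact Or.inr ⟨u, v, h'.1, h'.2.1, h'.2.2, hR, SimpleGraph.Reachable.refl _⟩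

lemma Revealed_mono {E : Type*} [Fintype E] (expl : Exploration E) (ω : E → Bool)
    {m n : ℕ} (h : m ≤ n) : Revealed expl ω m ⊆ Revealed expl ω n := by
  rintro e ⟨j, hj, rfl⟩
  exact ⟨j, lt_of_lt_of_le hj h, rfl⟩

/-- Once the boundary is empty, it stays empty. -/
lemma boundary_step {V : Type*} [Fintype V] [DecidableEq V] (H : SimpleGraph V) (o : V)
    (expl : Exploration (Sym2 V)) (ω : Sym2 V → Bool) (n : ℕ)
    (h : BoundaryEdges H o expl ω n = ∅) : BoundaryEdges H o expl ω (n + 1) = ∅ := by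
  rw [Set.eq_empty_iff_forall_notMem] at h ⊢
  rintro c ⟨hcr, x, y, rfl, hadj, hreach⟩
  have hsub : Revealed expl ω n ⊆ Revealed expl ω (n + 1) := Revealed_mono _ _ (Nat.le_succ _)
  have hinter : Revealed expl ω (n + 1) ∩ Revealed expl ω n = Revealed expl ω n :=
    Set.inter_eq_right.mpr hsub
  rcases openOn_reach_split H ω (Revealed expl ω (n + 1)) (Revealed expl ω n) hreach with
    h1 | ⟨p, q, hpq, hω, _, hnR, hrp⟩
  · rw [hinter] at h1
    exact h s(x, y) ⟨fun hm => hcr (hsub hm), x, y, rfl, hadj, h1⟩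
  · rw [hinter] at hrp
    exact h s(p, q) ⟨hnR, p, q, rfl, hpq, hrp⟩

/-- For the exploration which first reveals (by smallest index) the edges incident to the
growing cluster of `o`, and then the remaining edges by smallest index: if the edge queried
at step `k+1` is pivotal for `{C_o ∩ G = ∅}`, then it has exactly one endpoint `v` connected
to `o` by revealed open edges, while the other endpoint `w` is connected to a green vertex
by open edges none of which has been revealed among `e_1, …, e_{k+1}`. -/
theorem cluster_first_pivotal_structure {V : Type*} [Fintype V] [DecidableEq V]
    (H : SimpleGraph V) (o : V) (idx : Sym2 V ↪ ℕ)
    (expl : Exploration (Sym2 V))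
    (hfirst : ∀ (ω : Sym2 V → Bool) (k : Fin (Fintype.card (Sym2 V))),
      (BoundaryEdges H o expl ω k).Nonempty →
        expl.order ω k ∈ BoundaryEdges H o expl ω k ∧
        ∀ b ∈ BoundaryEdges H o expl ω k, idx (expl.order ω k) ≤ idx b)
    (hsecond : ∀ (ω : Sym2 V → Bool) (k : Fin (Fintype.card (Sym2 V))),
      ¬ (BoundaryEdges H o expl ω k).Nonempty →
        ∀ b ∉ Revealed expl ω (k : ℕ), idx (expl.order ω k) ≤ idx b)
    (A : Set ((Sym2 V → Bool) × (V → Bool)))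
    (hA : A = {z | ¬ ∃ v ∈ cluster H o z.1, z.2 v = true}) :
    ∀ (ω : Sym2 V → Bool) (η : V → Bool) (k : Fin (Fintype.card (Sym2 V))),
      Pivotal A (expl.order ω k) (ω, η) →
      ∃ v w : V, expl.order ω k = s(v, w) ∧ H.Adj v w ∧
        (openOn H ω (Revealed expl ω (k : ℕ))).Reachable o v ∧
        ¬ (openOn H ω (Revealed expl ω (k : ℕ))).Reachable o w ∧
        ∃ g : V, η g = true ∧
          (openOn H ω (Revealed expl ω ((k : ℕ) + 1))ᶜ).Reachable w g := by
  classical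
  intro ω η k hpiv
  set a : Sym2 V := expl.order ω k with ha
  set Rk : Set (Sym2 V) := Revealed expl ω (k : ℕ) with hRkdef
  set Rk1 : Set (Sym2 V) := Revealed expl ω ((k : ℕ) + 1) with hRk1def
  set ωc : Sym2 V → Bool := Function.update ω a false with hωcdef
  set ωo : Sym2 V → Bool := Function.update ω a true with hωodef
  have hωc_ne : ∀ e, e ≠ a → ωc e = ω e := fun e he => Function.update_of_ne he _ _
  have hωo_ne : ∀ e, e ≠ a → ωo e = ω e := fun e he => Function.update_of_ne he _ _
  have hωca : ωc a = false := Function.update_self _ _ _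
  have hωoa : ωo a = true := Function.update_self _ _ _
  have ha_not_rev : a ∉ Rk := by
    rintro ⟨j, hj, hje⟩
    have hjk : j = k := (expl.bij ω).1 (hje.trans ha)
    rw [hjk] at hj
    exact lt_irrefl _ hj
  have hrev_ne : ∀ e ∈ Rk, e ≠ a := fun e he h => ha_not_rev (h ▸ he)
  have ha_rev1 : a ∈ Rk1 := ⟨k, Nat.lt_succ_self _, ha.symm⟩
  have hrev1_ne : ∀ e ∈ Rk1, e ≠ a → e ∈ Rk := by
    rintro e ⟨j, hj, rfl⟩ hne
    refine ⟨j, ?_, rfl⟩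
    have hjk : j ≠ k := fun h => hne (h ▸ ha.symm)
    have hjk' : (j : ℕ) ≠ (k : ℕ) := fun h => hjk (Fin.ext h)
    omega
  -- membership in A
  have hmemA : ∀ σ : Sym2 V → Bool,
      ((σ, η) ∈ A ↔ ¬ ∃ u, u ∈ cluster H o σ ∧ η u = true) := by
    intro σ; rw [hA]; exact Iff.rfl
  have hcle : ∀ u, u ∈ cluster H o ωc → u ∈ cluster H o ωo := by
    intro u hu
    have hle : openOn H ωc Set.univ ≤ openOn H ωo Set.univ := by
      refine openOn_le H (subset_refl _) (fun e _ he => ?_)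
      by_cases hea : e = a
      · subst hea; exact hωoa
      · rw [hωo_ne e hea, ← hωc_ne e hea]; exact he
    exact SimpleGraph.Reachable.mono hle hu
  have hkey : (¬ ∃ u, u ∈ cluster H o ωc ∧ η u = true) ∧
      (∃ u, u ∈ cluster H o ωo ∧ η u = true) := by
    have himp : (∃ u, u ∈ cluster H o ωc ∧ η u = true) →
        (∃ u, u ∈ cluster H o ωo ∧ η u = true) := by
      rintro ⟨u, hu, hη⟩; exact ⟨u, hcle u hu, hη⟩
    have hpiv' : ¬ (((Function.update ω a (! ω a), η) ∈ A) ↔ (ω, η) ∈ A) := hpiv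
    rcases Bool.eq_false_or_eq_true (ω a) with hb | hb
    · -- ω a = true : ω is the open configuration
      have h1 : ωo = ω := by rw [hωodef, ← hb]; exact Function.update_eq_self a ω
      have h2 : Function.update ω a (! ω a) = ωc := by rw [hb, hωcdef, Bool.not_true]
      rw [h2, hmemA, ← h1, hmemA, not_iff_not] at hpiv'
      refine ⟨fun hPc => hpiv' ⟨fun _ => himp hPc, fun _ => hPc⟩, ?_⟩
      by_contra hPo
      exact hpiv' ⟨fun hPc => (hPo (himp hPc)).elim, fun hp => (hPo hp).elim⟩
    · -- ω a = false : ω is the closed configuration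
      have h1 : ωc = ω := by rw [hωcdef, ← hb]; exact Function.update_eq_self a ω
      have h2 : Function.update ω a (! ω a) = ωo := by rw [hb, hωodef, Bool.not_false]
      rw [h2, hmemA, ← h1, hmemA, not_iff_not] at hpiv'
      refine ⟨fun hPc => hpiv' ⟨fun _ => hPc, fun _ => himp hPc⟩, ?_⟩
      by_contra hPo
      exact hpiv' ⟨fun hp => (hPo hp).elim, fun hPc => (hPo (himp hPc)).elim⟩
  obtain ⟨hno, hyes⟩ := hkey
  obtain ⟨g, hgcl, hggreen⟩ := hyes
  have hno' : ∀ u, (openOn H ωc Set.univ).Reachable o u → η u = true → False :=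
    fun u h1 h2 => hno ⟨u, h1, h2⟩
  -- graph comparison lemmas
  have hle_univ : ∀ (σ : Sym2 V → Bool) (S : Set (Sym2 V)),
      openOn H σ S ≤ openOn H σ Set.univ :=
    fun σ S => openOn_le H (Set.subset_univ _) (fun _ _ h => h)
  have hT1 : openOn H ωo (Set.univ ∩ {e | e ≠ a}) ≤ openOn H ωc Set.univ := by
    refine openOn_le H (Set.subset_univ _) (fun e he h => ?_)
    rw [hωc_ne e he.2, ← hωo_ne e he.2]; exact h
  have hT2 : openOn H ω Rk ≤ openOn H ωc Set.univ := by
    refine openOn_le H (Set.subset_univ _) (fun e he h => ?_)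
    rw [hωc_ne e (hrev_ne e he)]; exact h
  have hT3 : openOn H ωc (Set.univ ∩ Rk) ≤ openOn H ω Rk := by
    refine openOn_le H Set.inter_subset_right (fun e he h => ?_)
    rw [← hωc_ne e (hrev_ne e he.2)]; exact h
  have hT4 : openOn H ωc (Set.univ ∩ Rk1ᶜ) ≤ openOn H ω Rk1ᶜ := by
    refine openOn_le H Set.inter_subset_right (fun e he h => ?_)
    rw [← hωc_ne e (fun hea => he.2 (hea ▸ ha_rev1))]; exact h
  -- decompose the open path from o to the green vertex g
  have hgreach : (openOn H ωo Set.univ).Reachable o g := hgcl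
  rcases openOn_reach_split H ωo Set.univ {e | e ≠ a} hgreach with h1 | ⟨p, q, hpq, _, _, hnR, hrp⟩
  · exact (hno' g (h1.mono hT1) hggreen).elim
  have haeq_pq : s(p, q) = a := not_not.mp hnR
  have horp : (openOn H ωc Set.univ).Reachable o p := hrp.mono hT1
  rcases openOn_reach_split H ωo Set.univ {e | e ≠ a} hgreach.symm with
    h2 | ⟨p2, q2, _, _, _, hnR2, hrg2⟩
  · exact (hno' g ((h2.mono hT1).symm) hggreen).elim
  have haeq2 : s(p2, q2) = a := not_not.mp hnR2
  have hgr : (openOn H ωc Set.univ).Reachable g p2 := hrg2.mono hT1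
  rcases Sym2.eq_iff.mp (haeq_pq.trans haeq2.symm) with ⟨h3, h4⟩ | ⟨h3, h4⟩
  · -- p = p2 : then o and g are both connected to p, contradiction
    have hpg : (openOn H ωc Set.univ).Reachable p g := by rw [h3]; exact hgr.symm
    exact (hno' g (horp.trans hpg) hggreen).elim
  -- p = q2, q = p2 : so g is connected to q in the closed configuration
  have hqg : (openOn H ωc Set.univ).Reachable q g := by rw [h4]; exact hgr.symm
  -- the boundary at step k is nonempty
  have hbd : (BoundaryEdges H o expl ω (k : ℕ)).Nonempty := by
    rcases openOn_reach_split H ωc Set.univ Rk horp with h5 | ⟨x, y, hxy, hωxy, _, hxR, hrx⟩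
    · exact ⟨a, ha_not_rev, p, q, haeq_pq.symm, hpq, h5.mono hT3⟩
    · exact ⟨s(x, y), hxR, x, y, rfl, hxy, hrx.mono hT3⟩
  obtain ⟨hanr2, v', w', haeq', hadj', hreachv'⟩ := (hfirst ω k hbd).1
  rcases Sym2.eq_iff.mp (haeq'.symm.trans haeq_pq.symm) with ⟨h6, h7⟩ | ⟨h6, h7⟩
  swap
  · -- v' = q is impossible : q is connected to g
    have hoq : (openOn H ωc Set.univ).Reachable o q := by
      rw [← h6]; exact hreachv'.mono hT2
    exact (hno' g (hoq.trans hqg) hggreen).elim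
  -- boundaries are nonempty at every earlier step
  have hbd_mono : ∀ n : ℕ, BoundaryEdges H o expl ω n = ∅ →
      ∀ m, n ≤ m → BoundaryEdges H o expl ω m = ∅ := by
    intro n hn m hm
    induction m, hm using Nat.le_induction with
    | base => exact hn
    | succ m hm ih => exact boundary_step H o expl ω m ih
  have hbd_all : ∀ n : ℕ, n ≤ (k : ℕ) → (BoundaryEdges H o expl ω n).Nonempty := by
    intro n hn
    by_contra hcon
    rw [Set.not_nonempty_iff_eq_empty] at hcon
    exact hbd.ne_empty (hbd_mono n hcon _ hn)
  -- endpoints of revealed open edges are connected to o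
  have hrevk_reach : ∀ e ∈ Rk, ω e = true → ∀ x y : V, e = s(x, y) →
      (openOn H ω Rk).Reachable o x := by
    rintro e ⟨j, hj, rfl⟩ hωe x y hexy
    have hbdj := hbd_all (j : ℕ) hj.le
    obtain ⟨hjnr, v2, w2, hvw2, hadj2, hr2⟩ := (hfirst ω j hbdj).1
    have hle_j1k : openOn H ω (Revealed expl ω ((j : ℕ) + 1)) ≤ openOn H ω Rk :=
      openOn_le H (Revealed_mono _ _ (by omega)) (fun _ _ h => h)
    have hle_jj1 : openOn H ω (Revealed expl ω (j : ℕ)) ≤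
        openOn H ω (Revealed expl ω ((j : ℕ) + 1)) :=
      openOn_le H (Revealed_mono _ _ (Nat.le_succ _)) (fun _ _ h => h)
    have hmemj1 : expl.order ω j ∈ Revealed expl ω ((j : ℕ) + 1) :=
      ⟨j, Nat.lt_succ_self _, rfl⟩
    have hedge : (openOn H ω (Revealed expl ω ((j : ℕ) + 1))).Adj v2 w2 :=
      (⟨hadj2, by rw [← hvw2]; exact hωe, by rw [← hvw2]; exact hmemj1⟩ :
        H.Adj v2 w2 ∧ ω s(v2, w2) = true ∧ s(v2, w2) ∈ Revealed expl ω ((j : ℕ) + 1))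
    have hrv : (openOn H ω Rk).Reachable o v2 := (hr2.mono hle_jj1).mono hle_j1k
    have hrw : (openOn H ω Rk).Reachable o w2 :=
      ((hr2.mono hle_jj1).trans hedge.reachable).mono hle_j1k
    rcases Sym2.eq_iff.mp (hvw2.symm.trans hexy) with ⟨h8, _⟩ | ⟨_, h8⟩
    · rw [← h8]; exact hrv
    · rw [← h8]; exact hrw
  -- assemble the conclusion
  refine ⟨v', w', haeq', hadj', hreachv', ?_, g, hggreen, ?_⟩
  · intro hcon
    have hoq : (openOn H ωc Set.univ).Reachable o q := by
      rw [← h7]; exact hcon.mono hT2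
    exact hno' g (hoq.trans hqg) hggreen
  · rw [h7]
    rcases openOn_reach_split H ωc Set.univ Rk1ᶜ hqg with h9 | ⟨x, y, hxy, hωxy, _, hnR9, hr9⟩
    · exact h9.mono hT4
    exfalso
    have hmem9 : s(x, y) ∈ Rk1 := Set.not_notMem.mp hnR9
    have hne9 : s(x, y) ≠ a := by
      intro h
      rw [h, hωca] at hωxy
      exact Bool.false_ne_true hωxy
    have hmemk : s(x, y) ∈ Rk := hrev1_ne _ hmem9 hne9
    have hωxy' : ω s(x, y) = true := by rw [← hωc_ne _ hne9]; exact hωxy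
    have hox : (openOn H ω Rk).Reachable o x := hrevk_reach _ hmemk hωxy' x y rfl
    have h10 : (openOn H ωc Set.univ).Reachable o x := hox.mono hT2
    have h11 : (openOn H ωc Set.univ).Reachable q x := hr9.mono (hle_univ ωc _)
    exact hno' g ((h10.trans h11.symm).trans hqg) hggreen
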